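/- Given integers a > b > 0, define integer sequences (r_k) and (t_k) by r₀ = a, r₁ = b, t₀ = 0, t₁ = 1, and for k ≥ 1: q_k = r_{k−1} div r_k (integer division, with the convention that division by zero yields 0), r_{k+1} = r_{k−1} − q_k·r_k, and t_{k+1} = t_{k−1} − q_k·t_k. Then for every natural number k with r_k > 0, we have r_k·|t_{k+1}| ≤ a. -/
import Mathlib


/-- Invariant `|s′·t| ≤ a` of `PartialXGCD`: for every `k` with `r k > 0`,
the product of the remainder `r k` and the absolute value of the next
`b`-coefficient `t (k+1)` is bounded by `a`. -/
theorem partialXGCD_invariant_product (a b : ℤ) (hab : a > b) (hb : b > 0)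
    (r t : ℕ → ℤ)
    (hr0 : r 0 = a) (hr1 : r 1 = b) (ht0 : t 0 = 0) (ht1 : t 1 = 1)
    (hrrec : ∀ k : ℕ, 1 ≤ k → r (k + 1) = r (k - 1) - (r (k - 1) / r k) * r k)
    (htrec : ∀ k : ℕ, 1 ≤ k → t (k + 1) = t (k - 1) - (r (k - 1) / r k) * t k) :
    ∀ k : ℕ, r k > 0 → r k * |t (k + 1)| ≤ a := by
  have key : ∀ k : ℕ, (0 ≤ r k ∧ 0 ≤ r (k+1) ∧ t k * t (k+1) ≤ 0) ∧
      |t (k+1) * r k - t k * r (k+1)| = a := by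
    intro k
    induction k with
    | zero =>
      refine ⟨⟨by rw [hr0]; omega, by rw [hr1]; omega, by rw [ht0, ht1]; norm_num⟩, ?_⟩
      rw [hr0, hr1, ht0, ht1]
      rw [show (1 : ℤ) * a - 0 * b = a by ring]
      exact abs_of_pos (by omega)
    | succ n ih =>
      obtain ⟨⟨h1, h2, h3⟩, h4⟩ := ih
      have hrrec' := hrrec (n+1) (by omega)
      have htrec' := htrec (n+1) (by omega)
      simp only [Nat.add_sub_cancel] at hrrec' htrec'
      have hq : 0 ≤ r n / r (n+1) := Int.ediv_nonneg h1 h2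
      have hr2 : 0 ≤ r (n+2) := by
        rcases eq_or_lt_of_le h2 with h | h
        · rw [hrrec', ← h]; simpa using h1
        · rw [hrrec']
          have e1 := Int.emod_nonneg (r n) (by omega : r (n+1) ≠ 0)
          have e2 := Int.mul_ediv_add_emod (r n) (r (n+1))
          have e3 : r n / r (n+1) * r (n+1) = r (n+1) * (r n / r (n+1)) :=
            mul_comm _ _
          omega
      have ht2 : t (n+1) * t (n+2) ≤ 0 := by
        rw [htrec']
        have heq : t (n+1) * (t n - r n / r (n+1) * t (n+1)) =
            t n * t (n+1) - (r n / r (n+1)) * (t (n+1) * t (n+1)) := by ring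
        rw [heq]
        have h5 : 0 ≤ t (n+1) * t (n+1) := mul_self_nonneg _
        nlinarith
      refine ⟨⟨h2, hr2, ht2⟩, ?_⟩
      rw [hrrec', htrec']
      rw [show (t n - r n / r (n+1) * t (n+1)) * r (n+1) -
          t (n+1) * (r n - r n / r (n+1) * r (n+1)) =
          -(t (n+1) * r n - t n * r (n+1)) by ring]
      rw [abs_neg]
      exact h4
  intro k hk
  obtain ⟨⟨h1, h2, h3⟩, h4⟩ := key k
  rcases lt_trichotomy (t (k+1)) 0 with h | h | h
  · have htk : 0 ≤ t k := by nlinarith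
    have hE : t (k+1) * r k - t k * r (k+1) ≤ 0 := by nlinarith
    rw [abs_of_nonpos hE] at h4
    rw [abs_of_neg h]
    nlinarith
  · rw [h]
    simp
    omega
  · have htk : t k ≤ 0 := by nlinarith
    have hE : 0 ≤ t (k+1) * r k - t k * r (k+1) := by nlinarith
    rw [abs_of_nonneg hE] at h4
    rw [abs_of_pos h]
    nlinarith
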